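/- Fix an integer n ≥ 1 and a strictly decreasing integer tuple y = (y_1 > y_2 > … > y_{n+1}). Then the sum, over all strictly decreasing integer tuples x = (x_1 > … > x_n) satisfying y_{i+1} ≤ x_i ≤ y_i for i = 1,…,n, of Δ(x) · 2^{−#{i ∈ {1,…,n} : x_i = y_i or x_i = y_{i+1}}}, equals Δ(y) / n!. -/

import Mathlib

open Finset
open Polynomial Matrix


noncomputable def Fp (j : ℕ) : ℝ[X] :=
  C ((2 * ((j:ℝ) + 1)))⁻¹ * ((X + C 1) ^ (j + 1) - (X + C (-1)) ^ (j + 1))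

noncomputable def Gp (j : ℕ) : ℝ[X] :=
  C (((j : ℝ) + 1))⁻¹ *
    (C (2:ℝ)⁻¹ * X ^ (j + 1) + C (4:ℝ)⁻¹ * (X + C 1) ^ (j + 1)
      + C (4:ℝ)⁻¹ * (X + C (-1)) ^ (j + 1))

lemma Fp_coeff_eq_zero {j k : ℕ} (h : j < k) : (Fp j).coeff k = 0 := by
  simp only [Fp, coeff_C_mul, coeff_sub, coeff_X_add_C_pow]
  rcases eq_or_lt_of_le (Nat.succ_le_of_lt h) with h1 | h1
  · rw [← h1]
    simp
  · rw [Nat.choose_eq_zero_of_lt h1]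
    simp

lemma Fp_coeff_self (j : ℕ) : (Fp j).coeff j = 1 := by
  simp only [Fp, coeff_C_mul, coeff_sub, coeff_X_add_C_pow]
  rw [Nat.succ_sub (le_refl j), Nat.sub_self, Nat.choose_succ_self_right]
  have : ((j:ℝ) + 1) ≠ 0 := by positivity
  push_cast
  field_simp
  ring

lemma Fp_natDegree_le (j : ℕ) : (Fp j).natDegree ≤ j :=
  natDegree_le_iff_coeff_eq_zero.mpr fun _ h => Fp_coeff_eq_zero h

lemma Gp_coeff_eq_zero {j k : ℕ} (h : j + 1 < k) : (Gp j).coeff k = 0 := by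
  simp only [Gp, coeff_C_mul, coeff_add, coeff_X_pow, coeff_X_add_C_pow]
  rw [Nat.choose_eq_zero_of_lt h, if_neg (by omega)]
  simp

lemma Gp_coeff_top (j : ℕ) : (Gp j).coeff (j + 1) = ((j:ℝ) + 1)⁻¹ := by
  simp only [Gp, coeff_C_mul, coeff_add, coeff_X_pow, coeff_X_add_C_pow]
  rw [Nat.sub_self, Nat.choose_self]
  norm_num

lemma Gp_natDegree_le (j : ℕ) : (Gp j).natDegree ≤ j + 1 :=
  natDegree_le_iff_coeff_eq_zero.mpr fun _ h => Gp_coeff_eq_zero h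

noncomputable def gg (j : ℕ) (t : ℤ) : ℝ := ((t:ℝ)) ^ (j + 1) * (((j:ℝ) + 1))⁻¹

lemma Fp_eval (j : ℕ) (t : ℤ) :
    (Fp j).eval (t:ℝ) = (gg j (t+1) - gg j (t-1)) / 2 := by
  simp only [Fp, gg, eval_mul, eval_C, eval_sub, eval_pow, eval_add, eval_X]
  push_cast
  have : ((j:ℝ) + 1) ≠ 0 := by positivity
  field_simp
  ring

lemma Gp_eval (j : ℕ) (t : ℤ) :
    (Gp j).eval (t:ℝ) = gg j t / 2 + gg j (t+1) / 4 + gg j (t-1) / 4 := by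
  simp only [Gp, gg, eval_mul, eval_C, eval_add, eval_pow, eval_X]
  push_cast
  have : ((j:ℝ) + 1) ≠ 0 := by positivity
  field_simp
  ring

lemma Icc_succ_top {a b : ℤ} (h : a ≤ b + 1) :
    Finset.Icc a (b + 1) = insert (b + 1) (Finset.Icc a b) := by
  ext t
  simp only [Finset.mem_Icc, Finset.mem_insert]
  omega

lemma trapS (g : ℤ → ℝ) (a : ℤ) :
    ∀ b, a ≤ b →
      ∑ t ∈ Finset.Icc a b, (g (t+1) - g (t-1)) / 2
        = ((g b / 2 + g (b+1) / 4 + g (b-1) / 4) - (g a / 2 + g (a+1) / 4 + g (a-1) / 4))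
          + ((g (a+1) - g (a-1)) / 2) / 2 + ((g (b+1) - g (b-1)) / 2) / 2 := by
  refine Int.le_induction ?_ ?_
  · rw [Finset.Icc_self, Finset.sum_singleton]
    ring
  · intro b hb ih
    rw [Icc_succ_top (by omega), Finset.sum_insert (by simp), ih]
    have h1 : b + 1 - 1 = b := by ring
    have h2 : b + 1 + 1 = b + 2 := by ring
    rw [h1, h2]
    ring

lemma trapW (g : ℤ → ℝ) (a b : ℤ) (hab : a < b) :
    ∑ t ∈ Finset.Icc a b, (if t = b ∨ t = a then (2:ℝ)⁻¹ else 1) * ((g (t+1) - g (t-1)) / 2)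
      = (g b / 2 + g (b+1) / 4 + g (b-1) / 4) - (g a / 2 + g (a+1) / 4 + g (a-1) / 4) := by
  have key := trapS g a b hab.le
  have step : ∀ t ∈ Finset.Icc a b,
      (if t = b ∨ t = a then (2:ℝ)⁻¹ else 1) * ((g (t+1) - g (t-1)) / 2)
        = (g (t+1) - g (t-1)) / 2
          - (if t = a then ((g (a+1) - g (a-1)) / 2) / 2 else 0)
          - (if t = b then ((g (b+1) - g (b-1)) / 2) / 2 else 0) := by
    intro t _
    by_cases ha : t = a
    · subst ha
      rw [if_pos (Or.inr rfl), if_pos rfl, if_neg (by omega)]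
      ring
    · by_cases hbt : t = b
      · subst hbt
        rw [if_pos (Or.inl rfl), if_neg ha, if_pos rfl]
        ring
      · rw [if_neg (by tauto), if_neg ha, if_neg hbt]
        ring
  rw [Finset.sum_congr rfl step]
  rw [Finset.sum_sub_distrib, Finset.sum_sub_distrib, key]
  rw [Finset.sum_ite_eq' (Finset.Icc a b) a, Finset.sum_ite_eq' (Finset.Icc a b) b]
  rw [if_pos (by simp [hab.le]), if_pos (by simp [hab.le])]
  ring

lemma det_sum_pi {n : ℕ} (S : Fin n → Finset ℤ) (c : Fin n → ℤ → ℝ) (ρ : ℤ → Fin n → ℝ) :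
    ∑ r ∈ Fintype.piFinset S, (∏ i, c i (r i)) * Matrix.det (Matrix.of fun i j => ρ (r i) j)
      = Matrix.det (Matrix.of fun i j => ∑ t ∈ S i, c i t * ρ t j) := by
  classical
  have h := (Matrix.detRowAlternating (R := ℝ) (n := Fin n)).toMultilinearMap.map_sum_finset
    (fun i t => c i t • ρ t) S
  have hL : Matrix.det (Matrix.of fun i j => ∑ t ∈ S i, c i t * ρ t j)
      = (Matrix.detRowAlternating (R := ℝ) (n := Fin n)).toMultilinearMap
          (fun i => ∑ t ∈ S i, c i t • ρ t) := by
    have : (fun i => ∑ t ∈ S i, c i t • ρ t) = fun i j => ∑ t ∈ S i, c i t * ρ t j := by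
      funext i j
      simp [Finset.sum_apply]
    rw [this]
    rfl
  rw [hL, h]
  refine Finset.sum_congr rfl fun r _ => ?_
  have := MultilinearMap.map_smul_univ
    (Matrix.detRowAlternating (R := ℝ) (n := Fin n)).toMultilinearMap
    (fun i => c i (r i)) (fun i => ρ (r i))
  simp at this ⊢
  exact this.symm

lemma det_upperTri_mul {n : ℕ} (A L : Matrix (Fin n) (Fin n) ℝ)
    (h : ∀ k j : Fin n, j < k → L k j = 0) :
    Matrix.det (A * L) = Matrix.det A * ∏ j, L j j := by
  rw [Matrix.det_mul, Matrix.det_of_upperTriangular (M := L) (fun i j hj => h i j hj)]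

lemma det_eval_Fp {n : ℕ} (u : Fin n → ℝ) :
    Matrix.det (Matrix.of fun i j : Fin n => (Fp (j:ℕ)).eval (u i))
      = Matrix.det (Matrix.vandermonde u) := by
  have hM : (Matrix.of fun i j : Fin n => (Fp (j:ℕ)).eval (u i))
      = Matrix.vandermonde u * Matrix.of (fun k j : Fin n => (Fp (j:ℕ)).coeff (k:ℕ)) := by
    ext i j
    rw [Matrix.mul_apply]
    simp only [Matrix.of_apply]
    rw [Polynomial.eval_eq_sum_range' (lt_of_le_of_lt (Fp_natDegree_le (j:ℕ)) j.isLt) (u i)]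
    rw [← Fin.sum_univ_eq_sum_range]
    simp [Matrix.vandermonde, mul_comm]
  rw [hM, det_upperTri_mul]
  · simp [Fp_coeff_self]
  · intro k j hjk
    exact Fp_coeff_eq_zero hjk

lemma det_Gp_diff {n : ℕ} (va vb : Fin n → ℝ) :
    Matrix.det (Matrix.of fun i j : Fin n =>
        (Gp (j:ℕ)).eval (vb i) - (Gp (j:ℕ)).eval (va i))
      = Matrix.det (Matrix.of fun i k : Fin n =>
          vb i ^ ((k:ℕ)+1) - va i ^ ((k:ℕ)+1)) * (Nat.factorial n : ℝ)⁻¹ := by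
  have hM : (Matrix.of fun i j : Fin n => (Gp (j:ℕ)).eval (vb i) - (Gp (j:ℕ)).eval (va i))
      = Matrix.of (fun i k : Fin n => vb i ^ ((k:ℕ)+1) - va i ^ ((k:ℕ)+1))
        * Matrix.of (fun k j : Fin n => (Gp (j:ℕ)).coeff ((k:ℕ)+1)) := by
    ext i j
    rw [Matrix.mul_apply]
    simp only [Matrix.of_apply]
    rw [Polynomial.eval_eq_sum_range' (lt_of_le_of_lt (Gp_natDegree_le (j:ℕ))
      (by omega : (j:ℕ) + 1 < n + 1)) (vb i)]
    rw [Polynomial.eval_eq_sum_range' (lt_of_le_of_lt (Gp_natDegree_le (j:ℕ))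
      (by omega : (j:ℕ) + 1 < n + 1)) (va i)]
    rw [← Finset.sum_sub_distrib, Finset.sum_range_succ']
    rw [← Fin.sum_univ_eq_sum_range (fun k => (Gp (j:ℕ)).coeff (k+1) * vb i ^ (k+1)
      - (Gp (j:ℕ)).coeff (k+1) * va i ^ (k+1))]
    simp only [pow_zero, mul_one, sub_self, add_zero]
    refine Finset.sum_congr rfl fun k _ => ?_
    ring
  rw [hM, det_upperTri_mul]
  · congr 1
    simp only [Matrix.of_apply]
    have : ∀ j : Fin n, (Gp (j:ℕ)).coeff ((j:ℕ)+1) = (((j:ℕ):ℝ) + 1)⁻¹ :=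
      fun j => Gp_coeff_top (j:ℕ)
    rw [Finset.prod_congr rfl (fun j _ => this j), Finset.prod_inv_distrib]
    congr 1
    rw [Fin.prod_univ_eq_prod_range (fun k => ((k:ℝ) + 1)),
      ← Finset.prod_range_add_one_eq_factorial n]
    push_cast
    rfl
  · intro k j hjk
    exact Gp_coeff_eq_zero (by omega)

lemma det_diff_vandermonde {n : ℕ} (Y : Fin (n+1) → ℝ) :
    Matrix.det (Matrix.of fun i k : Fin n =>
        Y i.succ ^ ((k:ℕ)+1) - Y i.castSucc ^ ((k:ℕ)+1))
      = Matrix.det (Matrix.vandermonde Y) := by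
  classical
  set W : Matrix (Fin (n+1)) (Fin (n+1)) ℝ := Matrix.vandermonde Y with hW
  set E : Matrix (Fin (n+1)) (Fin (n+1)) ℝ :=
    Matrix.of (fun i j : Fin (n+1) =>
      if i = j then (-1:ℝ) else if (i:ℕ)+1 = (j:ℕ) then 1 else 0) with hE
  have hEapp : ∀ i j : Fin (n+1),
      E i j = if i = j then (-1:ℝ) else if (i:ℕ)+1 = (j:ℕ) then 1 else 0 := fun i j => rfl
  have hEdet : E.det = (-1:ℝ)^(n+1) := by
    have htri : E.BlockTriangular id := by
      intro i j hij
      have h1 : (j:ℕ) < (i:ℕ) := hij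
      rw [hEapp, if_neg (by intro h; rw [Fin.ext_iff] at h; omega), if_neg (by omega)]
    rw [Matrix.det_of_upperTriangular htri]
    have : ∀ i : Fin (n+1), E i i = (-1:ℝ) := fun i => by rw [hEapp, if_pos rfl]
    rw [Finset.prod_congr rfl fun i _ => this i, Finset.prod_const]
    simp
  have hrow : ∀ (i : Fin n) (j : Fin (n+1)),
      (E * W) i.castSucc j = W i.succ j - W i.castSucc j := by
    intro i j
    rw [Matrix.mul_apply]
    have hne : i.castSucc ≠ i.succ := (Fin.castSucc_lt_succ (i := i)).ne
    have key : ∀ k : Fin (n+1), E i.castSucc k * W k j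
        = (if k = i.succ then W i.succ j else 0)
          - (if k = i.castSucc then W i.castSucc j else 0) := by
      intro k
      by_cases h1 : k = i.castSucc
      · subst h1
        rw [hEapp, if_pos rfl, if_neg hne, if_pos rfl]
        ring
      · by_cases h2 : k = i.succ
        · subst h2
          rw [hEapp, if_neg hne, if_pos (by simp [Fin.val_succ]),
            if_pos rfl, if_neg (fun h => hne h.symm)]
          ring
        · rw [hEapp, if_neg (fun h => h1 h.symm), if_neg (by
            intro h
            apply h2
            rw [Fin.ext_iff, Fin.val_succ]
            simp only [Fin.coe_castSucc] at h
            omega), if_neg h2, if_neg h1]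
          ring
    rw [Finset.sum_congr rfl fun k _ => key k, Finset.sum_sub_distrib,
      Finset.sum_ite_eq' Finset.univ i.succ, Finset.sum_ite_eq' Finset.univ i.castSucc]
    simp
  have hlast : ∀ j : Fin (n+1), (E * W) (Fin.last n) j = - W (Fin.last n) j := by
    intro j
    rw [Matrix.mul_apply]
    have key : ∀ k : Fin (n+1), E (Fin.last n) k * W k j
        = if k = Fin.last n then - W (Fin.last n) j else 0 := by
      intro k
      by_cases h1 : k = Fin.last n
      · subst h1
        rw [hEapp, if_pos rfl, if_pos rfl]
        ring
      · rw [hEapp, if_neg (fun h => h1 h.symm), if_neg (by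
          have := k.isLt
          simp only [Fin.val_last]
          omega), if_neg h1]
        ring
    rw [Finset.sum_congr rfl fun k _ => key k,
      Finset.sum_ite_eq' Finset.univ (Fin.last n)]
    simp
  have hcol0 : ∀ i : Fin (n+1), i ≠ Fin.last n → (E * W) i 0 = 0 := by
    intro i hi
    obtain ⟨i', rfl⟩ := Fin.exists_castSucc_eq.mpr hi
    rw [hrow]
    simp [hW, Matrix.vandermonde]
  have hEW : (E * W).det = (-1:ℝ)^(n+1) *
      Matrix.det (Matrix.of fun i k : Fin n =>
        Y i.succ ^ ((k:ℕ)+1) - Y i.castSucc ^ ((k:ℕ)+1)) := by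
    rw [Matrix.det_succ_column_zero]
    rw [Finset.sum_eq_single (Fin.last n)]
    · rw [hlast 0]
      have hW0 : W (Fin.last n) 0 = 1 := by simp [hW, Matrix.vandermonde]
      rw [hW0]
      have hsub : ((E * W).submatrix (Fin.last n).succAbove Fin.succ)
          = Matrix.of (fun i k : Fin n =>
            Y i.succ ^ ((k:ℕ)+1) - Y i.castSucc ^ ((k:ℕ)+1)) := by
        ext i k
        rw [Matrix.submatrix_apply, Fin.succAbove_last, hrow]
        simp [hW, Matrix.vandermonde, Fin.val_succ]
      rw [hsub]
      simp only [Fin.val_last]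
      ring
    · intro i _ hi
      rw [hcol0 i hi]
      ring
    · intro h
      exact absurd (Finset.mem_univ _) h
  have hmul := Matrix.det_mul E W
  rw [hEdet] at hmul
  rw [hmul] at hEW
  have hne : ((-1:ℝ)^(n+1)) ≠ 0 := by
    apply pow_ne_zero; norm_num
  exact (mul_left_cancel₀ hne hEW).symm

lemma delta_eq_det {m : ℕ} (v : Fin m → ℝ) :
    (∏ i : Fin m, ∏ j : Fin m, if i < j then v i - v j else 1)
      = Matrix.det (Matrix.vandermonde fun i => v i.rev) := by
  rw [Matrix.det_vandermonde]
  have h1 : ∀ i : Fin m,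
      (∏ j : Fin m, if i < j then v i - v j else 1)
        = ∏ j ∈ Finset.Ioi i, (v i - v j) := by
    intro i
    rw [← Finset.prod_filter]
    congr 1
    ext j
    simp
  rw [Finset.prod_congr rfl fun i _ => h1 i]
  rw [Finset.prod_sigma' Finset.univ (fun i => Finset.Ioi i) (fun i j => v i - v j)]
  have h2 : (∏ i : Fin m, ∏ j ∈ Finset.Ioi i, (v j.rev - v i.rev))
      = ∏ p ∈ (Finset.univ.sigma fun i : Fin m => Finset.Ioi i),
        (v (Fin.rev p.2) - v (Fin.rev p.1)) :=
    Finset.prod_sigma' _ _ _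
  rw [h2]
  refine Finset.prod_nbij' (fun p => ⟨p.2.rev, p.1.rev⟩) (fun p => ⟨p.2.rev, p.1.rev⟩)
    ?_ ?_ ?_ ?_ ?_
  · intro p hp
    simp only [Finset.mem_sigma, Finset.mem_univ, Finset.mem_Ioi, true_and] at *
    exact Fin.rev_lt_rev.mpr hp
  · intro p hp
    simp only [Finset.mem_sigma, Finset.mem_univ, Finset.mem_Ioi, true_and] at *
    exact Fin.rev_lt_rev.mpr hp
  · intro p _
    simp [Fin.rev_rev]
  · intro p _
    simp [Fin.rev_rev]
  · intro p _
    simp [Fin.rev_rev]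


/-- Fix `n ≥ 1` and a strictly decreasing integer tuple
`y = (y₁ > … > y_{n+1})`.  The sum over all strictly decreasing integer tuples
`x = (x₁ > … > x_n)` with `y_{i+1} ≤ x_i ≤ y_i` of
`Δ(x) ⬝ 2^{-#{i : x_i = y_i or x_i = y_{i+1}}}` equals `Δ(y)/n!`. -/
theorem stmt_1 (n : ℕ) (hn : 1 ≤ n) (y : Fin (n + 1) → ℤ)
    (hdec : ∀ i j : Fin (n + 1), i < j → y j < y i) :
    ∑ x ∈ (univ : Finset ((i : Fin n) → {t : ℤ // t ∈ Finset.Icc (y i.succ) (y i.castSucc)})).filter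
        (fun x => ∀ i j : Fin n, i < j → (x j : ℤ) < (x i : ℤ)),
      (∏ i : Fin n, ∏ j : Fin n,
          if i < j then (((x i : ℤ) : ℝ) - ((x j : ℤ) : ℝ)) else 1) *
        ((2 : ℝ) ^ (univ.filter (fun i : Fin n =>
            (x i : ℤ) = y i.castSucc ∨ (x i : ℤ) = y i.succ)).card)⁻¹
    = (∏ i : Fin (n + 1), ∏ j : Fin (n + 1),
          if i < j then ((y i : ℝ) - (y j : ℝ)) else 1) / (Nat.factorial n : ℝ) := by
  classical
  have hmono : ∀ p q : Fin (n+1), p ≤ q → y q ≤ y p := by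
    intro p q hpq
    rcases eq_or_lt_of_le hpq with h | h
    · rw [h]
    · exact (hdec p q h).le
  set S : Fin n → Finset ℤ :=
    fun i => Finset.Icc (y (Fin.rev i).succ) (y (Fin.rev i).castSucc) with hS
  set w : Fin n → ℤ → ℝ :=
    fun i t => if t = y (Fin.rev i).castSucc ∨ t = y (Fin.rev i).succ
      then (2:ℝ)⁻¹ else 1 with hw
  -- Step A : drop the filter (terms off it vanish)
  rw [Finset.sum_filter]
  have hdrop : ∀ x : (i : Fin n) → {t : ℤ // t ∈ Finset.Icc (y i.succ) (y i.castSucc)},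
      (if ∀ i j : Fin n, i < j → (x j : ℤ) < (x i : ℤ) then
          (∏ i : Fin n, ∏ j : Fin n,
            if i < j then (((x i : ℤ) : ℝ) - ((x j : ℤ) : ℝ)) else 1) *
          ((2 : ℝ) ^ (univ.filter (fun i : Fin n =>
              (x i : ℤ) = y i.castSucc ∨ (x i : ℤ) = y i.succ)).card)⁻¹
        else 0)
        = (∏ i : Fin n, ∏ j : Fin n,
            if i < j then (((x i : ℤ) : ℝ) - ((x j : ℤ) : ℝ)) else 1) *
          ((2 : ℝ) ^ (univ.filter (fun i : Fin n =>
              (x i : ℤ) = y i.castSucc ∨ (x i : ℤ) = y i.succ)).card)⁻¹ := by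
    intro x
    by_cases h : ∀ i j : Fin n, i < j → (x j : ℤ) < (x i : ℤ)
    · rw [if_pos h]
    · rw [if_neg h]
      push_neg at h
      obtain ⟨i, j, hij, hge⟩ := h
      have h1 : (x j : ℤ) ≤ y j.castSucc := (Finset.mem_Icc.mp (x j).2).2
      have h2 : y i.succ ≤ (x i : ℤ) := (Finset.mem_Icc.mp (x i).2).1
      have h3 : y j.castSucc ≤ y i.succ := hmono _ _ (by
        rw [Fin.le_def]
        simp only [Fin.val_succ, Fin.coe_castSucc]
        exact hij)
      have heq : (((x i : ℤ)) : ℝ) = (((x j : ℤ)) : ℝ) := by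
        have hxx : (x i : ℤ) = (x j : ℤ) := le_antisymm hge (by omega)
        exact_mod_cast hxx
      have hz : (∏ i' : Fin n, ∏ j' : Fin n,
          if i' < j' then (((x i' : ℤ) : ℝ) - ((x j' : ℤ) : ℝ)) else 1) = 0 := by
        apply Finset.prod_eq_zero (Finset.mem_univ i)
        apply Finset.prod_eq_zero (Finset.mem_univ j)
        rw [if_pos hij, heq, sub_self]
      rw [hz, zero_mul]
  rw [Finset.sum_congr rfl fun x _ => hdrop x]
  -- Step B : rewrite the weight as a product
  have hwt : ∀ x : (i : Fin n) → {t : ℤ // t ∈ Finset.Icc (y i.succ) (y i.castSucc)},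
      ((2 : ℝ) ^ (univ.filter (fun i : Fin n =>
          (x i : ℤ) = y i.castSucc ∨ (x i : ℤ) = y i.succ)).card)⁻¹
      = ∏ i : Fin n, (if (x i : ℤ) = y i.castSucc ∨ (x i : ℤ) = y i.succ
          then (2:ℝ)⁻¹ else 1) := by
    intro x
    rw [← Finset.prod_const (b := (2:ℝ)), ← Finset.prod_inv_distrib, Finset.prod_filter]
  rw [Finset.sum_congr rfl fun x _ => by rw [hwt x]]
  -- Step C : bijection to piFinset, reversing indices
  have hbij : ∑ x : (i : Fin n) → {t : ℤ // t ∈ Finset.Icc (y i.succ) (y i.castSucc)},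
      (∏ i : Fin n, ∏ j : Fin n,
          if i < j then (((x i : ℤ) : ℝ) - ((x j : ℤ) : ℝ)) else 1) *
        (∏ i : Fin n, (if (x i : ℤ) = y i.castSucc ∨ (x i : ℤ) = y i.succ
          then (2:ℝ)⁻¹ else 1))
      = ∑ r ∈ Fintype.piFinset S,
          (∏ i : Fin n, w i (r i)) *
            Matrix.det (Matrix.of fun i j : Fin n =>
              (Fp (j:ℕ)).eval ((r i : ℤ) : ℝ)) := by
    refine Finset.sum_bij' (i := fun x _ => fun i : Fin n => (x (Fin.rev i) : ℤ))
      (j := fun r hr => fun i : Fin n => ⟨r (Fin.rev i), ?_⟩) ?_ ?_ ?_ ?_ ?_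
    · have := Fintype.mem_piFinset.mp hr (Fin.rev i)
      rw [hS] at this
      simpa [Fin.rev_rev] using this
    · intro x _
      rw [Fintype.mem_piFinset]
      intro i
      rw [hS]
      exact (x (Fin.rev i)).2
    · intro r hr
      exact Finset.mem_univ _
    · intro x _
      funext i
      apply Subtype.ext
      show ((x i.rev.rev : ℤ)) = (x i : ℤ)
      rw [Fin.rev_rev]
    · intro r hr
      funext i
      simp [Fin.rev_rev]
    · intro x _
      have hdet : (∏ i : Fin n, ∏ j : Fin n,
          if i < j then (((x i : ℤ) : ℝ) - ((x j : ℤ) : ℝ)) else 1)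
          = Matrix.det (Matrix.of fun i j : Fin n =>
              (Fp (j:ℕ)).eval ((x (Fin.rev i) : ℤ) : ℝ)) := by
        rw [delta_eq_det (fun i : Fin n => ((x i : ℤ) : ℝ))]
        exact (det_eval_Fp (fun i : Fin n => ((x (Fin.rev i) : ℤ) : ℝ))).symm
      have hwprod : (∏ i : Fin n, (if (x i : ℤ) = y i.castSucc ∨ (x i : ℤ) = y i.succ
          then (2:ℝ)⁻¹ else 1))
          = ∏ i : Fin n, w i ((x (Fin.rev i) : ℤ)) := by
        refine Fintype.prod_equiv Fin.revPerm _ _ fun i => ?_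
        simp only [hw, Fin.revPerm_apply, Fin.rev_rev]
        rw [Fin.revPerm_apply, Fin.rev_rev]
      rw [hdet, hwprod, mul_comm]
  rw [hbij]
  rw [det_sum_pi S w (fun t j => (Fp (j:ℕ)).eval ((t : ℤ) : ℝ))]
  -- Step E : evaluate the inner sums (trapezoid rule)
  have hB : (Matrix.of fun i j : Fin n =>
        ∑ t ∈ S i, w i t * (Fp (j:ℕ)).eval ((t : ℤ) : ℝ))
      = Matrix.of (fun i j : Fin n =>
          (Gp (j:ℕ)).eval (((y (Fin.rev i.succ) : ℤ) : ℝ))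
            - (Gp (j:ℕ)).eval (((y (Fin.rev i.castSucc) : ℤ) : ℝ))) := by
    ext i j
    simp only [Matrix.of_apply]
    have hab : y (Fin.rev i).succ < y (Fin.rev i).castSucc :=
      hdec _ _ Fin.castSucc_lt_succ
    have h1 : ∀ t ∈ S i, w i t * (Fp (j:ℕ)).eval ((t : ℤ) : ℝ)
        = (if t = y (Fin.rev i).castSucc ∨ t = y (Fin.rev i).succ then (2:ℝ)⁻¹ else 1)
          * ((gg (j:ℕ) (t+1) - gg (j:ℕ) (t-1)) / 2) := by
      intro t _
      rw [hw, Fp_eval]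
    rw [Finset.sum_congr rfl h1, hS]
    rw [trapW (gg (j:ℕ)) _ _ hab]
    rw [Fin.rev_succ, Fin.rev_castSucc]
    rw [Gp_eval, Gp_eval]
  rw [hB]
  rw [det_Gp_diff (fun i : Fin n => ((y (Fin.rev i.castSucc) : ℤ) : ℝ))
    (fun i : Fin n => ((y (Fin.rev i.succ) : ℤ) : ℝ))]
  rw [det_diff_vandermonde (fun p : Fin (n+1) => ((y p.rev : ℤ) : ℝ))]
  rw [delta_eq_det (fun i : Fin (n+1) => ((y i : ℤ) : ℝ))]
  rw [div_eq_mul_inv]
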